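/- Let p be a prime, G a finite p-group, and N a proper nontrivial subgroup of G contained in the center of G. Then (G,N) is an equal order pair if and only if there exists a positive integer i such that every element g ∈ G with g^(p^(i-1)) = 1 lies in N, and every element n ∈ N satisfies n^(p^i) = 1. -/
import Mathlib


/-- `(G, N)` is an *equal order pair* if `N` is a proper, nontrivial, normal subgroup of `G`
and for every `x ∈ G \ N` and every `n ∈ N`, the order of `x * n` equals the order of `x`. -/
def IsEqualOrderPair {G : Type*} [Group G] (N : Subgroup G) : Prop :=
  N.Normal ∧ N ≠ ⊥ ∧ N ≠ ⊤ ∧ ∀ x ∉ N, ∀ n ∈ N, orderOf (x * n) = orderOf x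

theorem stmt9 {G : Type*} [Group G] [Finite G] (p : ℕ) (hp : p.Prime)
    (hG : IsPGroup p G) (N : Subgroup G) (hle : N ≤ Subgroup.center G)
    (hbot : N ≠ ⊥) (htop : N ≠ ⊤) :
    IsEqualOrderPair N ↔
      ∃ i : ℕ, 0 < i ∧ (∀ g : G, g ^ p ^ (i - 1) = 1 → g ∈ N) ∧
        ∀ n ∈ N, n ^ p ^ i = 1 := by
  -- every element has p-power order
  have hord : ∀ g : G, ∃ a : ℕ, orderOf g = p ^ a := by
    intro g
    obtain ⟨k, hk⟩ := hG g
    obtain ⟨a, _, ha⟩ := (Nat.dvd_prime_pow hp).mp (orderOf_dvd_of_pow_eq_one hk)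
    exact ⟨a, ha⟩
  have hcomm : ∀ x : G, ∀ n ∈ N, Commute x n := fun x n hn =>
    (Subgroup.mem_center_iff.mp (hle hn) x)
  constructor
  · rintro ⟨-, -, -, heq⟩
    -- pick an element of N of maximal order
    haveI : Nonempty N := ⟨1⟩
    obtain ⟨n₀, hn₀⟩ := Finite.exists_max (fun n : N => orderOf (n : G))
    obtain ⟨i, hi⟩ := hord (n₀ : G)
    have hipos : 0 < i := by
      by_contra h
      have hi0 : i = 0 := Nat.eq_zero_of_not_pos h
      obtain ⟨a, ha⟩ := Subgroup.ne_bot_iff_exists_ne_one.mp hbot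
      have : orderOf (a : G) ≤ 1 := by
        have := hn₀ a
        rwa [hi, hi0, pow_zero] at this
      have : orderOf (a : G) = 1 := le_antisymm this (Nat.one_le_iff_ne_zero.mpr
        (orderOf_pos (a : G)).ne')
      have := orderOf_eq_one_iff.mp this
      exact ha (by ext; simpa using this)
    refine ⟨i, hipos, ?_, ?_⟩
    · intro g hg
      by_contra hgN
      have h1 : orderOf (g * n₀) = orderOf g := heq g hgN (n₀ : G) n₀.2
      have hdvd : orderOf g ∣ p ^ (i - 1) := orderOf_dvd_of_pow_eq_one hg
      have h2 : (g * (n₀ : G)) ^ p ^ (i - 1) = 1 :=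
        orderOf_dvd_iff_pow_eq_one.mp (h1 ▸ hdvd)
      rw [(hcomm g (n₀ : G) n₀.2).mul_pow, hg, one_mul] at h2
      have : orderOf (n₀ : G) ∣ p ^ (i - 1) := orderOf_dvd_of_pow_eq_one h2
      rw [hi] at this
      have hle' : i ≤ i - 1 :=
        (Nat.pow_dvd_pow_iff_le_right hp.one_lt).mp this
      omega
    · intro n hn
      obtain ⟨b, hb⟩ := hord n
      have hle' : orderOf n ≤ p ^ i := by
        have := hn₀ ⟨n, hn⟩
        simpa [hi] using this
      rw [hb] at hle'
      have hbi : b ≤ i := (Nat.pow_le_pow_iff_right hp.one_lt).mp hle'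
      exact orderOf_dvd_iff_pow_eq_one.mp (hb ▸ pow_dvd_pow p hbi)
  · rintro ⟨i, hipos, hN1, hN2⟩
    have hnormal : N.Normal := by
      constructor
      intro n hn g
      have h := Subgroup.mem_center_iff.mp (hle hn) g
      rw [h, mul_inv_cancel_right]
      exact hn
    refine ⟨hnormal, hbot, htop, ?_⟩
    intro x hx n hn
    obtain ⟨a, ha⟩ := hord x
    obtain ⟨b, hb⟩ := hord n
    -- b ≤ i
    have hbi : b ≤ i := by
      have : orderOf n ∣ p ^ i := orderOf_dvd_of_pow_eq_one (hN2 n hn)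
      rw [hb] at this
      exact (Nat.pow_dvd_pow_iff_le_right hp.one_lt).mp this
    -- i ≤ a
    have hia : i ≤ a := by
      by_contra h
      have hai : a ≤ i - 1 := by omega
      have : x ^ p ^ (i - 1) = 1 :=
        orderOf_dvd_iff_pow_eq_one.mp (ha ▸ pow_dvd_pow p hai)
      exact hx (hN1 x this)
    have hc := hcomm x n hn
    -- (x*n)^(p^a) = 1
    have hxa : x ^ p ^ a = 1 := by
      rw [← ha]; exact pow_orderOf_eq_one x
    have hna : n ^ p ^ a = 1 :=
      orderOf_dvd_iff_pow_eq_one.mp (hb ▸ pow_dvd_pow p (hbi.trans hia))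
    have htop1 : (x * n) ^ p ^ a = 1 := by
      rw [hc.mul_pow, hxa, hna, one_mul]
    -- (x*n)^(p^(a-1)) ≠ 1
    have hne : (x * n) ^ p ^ (a - 1) ≠ 1 := by
      rcases eq_or_lt_of_le hia with heqia | hlt
      · -- a = i
        intro hcon
        have hmem : x * n ∈ N := by
          apply hN1
          rwa [← heqia] at hcon
        have : x ∈ N := by
          have := N.mul_mem hmem (N.inv_mem hn)
          simpa using this
        exact hx this
      · -- i < a, so i ≤ a - 1
        have hna1 : n ^ p ^ (a - 1) = 1 :=
          orderOf_dvd_iff_pow_eq_one.mp (hb ▸ pow_dvd_pow p (by omega : b ≤ a - 1))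
        rw [hc.mul_pow, hna1, mul_one]
        intro hcon
        have : orderOf x ∣ p ^ (a - 1) := orderOf_dvd_of_pow_eq_one hcon
        rw [ha] at this
        have := (Nat.pow_dvd_pow_iff_le_right hp.one_lt).mp this
        omega
    -- conclude
    obtain ⟨c, hcc⟩ := hord (x * n)
    have hca : c ≤ a := by
      have : orderOf (x * n) ∣ p ^ a := orderOf_dvd_of_pow_eq_one htop1
      rw [hcc] at this
      exact (Nat.pow_dvd_pow_iff_le_right hp.one_lt).mp this
    have hca' : a ≤ c := by
      by_contra h
      have : c ≤ a - 1 := by omega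
      exact hne (orderOf_dvd_iff_pow_eq_one.mp (hcc ▸ pow_dvd_pow p this))
    rw [hcc, ha, le_antisymm hca hca']
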